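/- Let k ≥ 3 and n ≥ 1. Let s_k be the pattern (k−1)(k−2) ⋯ 2 1 (k+1) k and let r_k be the pattern k (k−1) ⋯ 2 1 (k+1), both of length k+1. If π is a permutation of {1,…,n} avoiding 123, s_k and r_k, and π(l) = n, then l ≤ k. -/
import Mathlib


/-- A permutation `σ` of `{1,…,n}` contains the pattern `τ` (given in one-line
notation as a function `Fin k → ℕ`) if there is a strictly increasing choice of
indices along which `σ` is order-isomorphic to `τ`. -/
def Contains {n k : ℕ} (σ : Equiv.Perm (Fin n)) (τ : Fin k → ℕ) : Prop :=
  ∃ f : Fin k → Fin n, StrictMono f ∧ ∀ a b : Fin k, σ (f a) < σ (f b) ↔ τ a < τ b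

/-- `σ` avoids the pattern `τ`. -/
def Avoids {n k : ℕ} (σ : Equiv.Perm (Fin n)) (τ : Fin k → ℕ) : Prop :=
  ¬ Contains σ τ

def p123 : Fin 3 → ℕ := ![1, 2, 3]
def p132 : Fin 3 → ℕ := ![1, 3, 2]
def p213 : Fin 3 → ℕ := ![2, 1, 3]
def p1432 : Fin 4 → ℕ := ![1, 4, 3, 2]
def p3214 : Fin 4 → ℕ := ![3, 2, 1, 4]
def p2143 : Fin 4 → ℕ := ![2, 1, 4, 3]

/-- The pattern `q_k = 1 (k+1) k (k-1) ⋯ 2` of length `k+1` (one-line notation,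
position `j` is 0-indexed here, values 1-indexed). -/
def qpat (k : ℕ) : Fin (k + 1) → ℕ := fun j => if j.val = 0 then 1 else k + 2 - j.val

/-- The pattern `r_k = k (k-1) ⋯ 2 1 (k+1)` of length `k+1`. -/
def rpat (k : ℕ) : Fin (k + 1) → ℕ := fun j => if j.val = k then k + 1 else k - j.val

/-- The pattern `s_k = (k-1)(k-2) ⋯ 2 1 (k+1) k` of length `k+1`. -/
def spat (k : ℕ) : Fin (k + 1) → ℕ := fun j =>
  if j.val = k - 1 then k + 1 else if j.val = k then k else k - 1 - j.val

/-- The pattern `u_k = 2 1 (k+1) k (k-1) ⋯ 4 3` of length `k+1`. -/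
def upat (k : ℕ) : Fin (k + 1) → ℕ := fun j =>
  if j.val = 0 then 2 else if j.val = 1 then 1 else k + 3 - j.val

theorem stmt17 (k n : ℕ) (hk : 3 ≤ k) (hn : 1 ≤ n) (π : Equiv.Perm (Fin n))
    (h1 : Avoids π p123) (h2 : Avoids π (spat k)) (h3 : Avoids π (rpat k)) :
    ∀ l : Fin n, (π l).val = n - 1 → l.val + 1 ≤ k := by
  have hp : ∀ a : Fin 3, p123 a = a.val + 1 := by decide
  intro l hl
  by_contra hcon
  push_neg at hcon
  have hkl : k ≤ l.val := by omega
  have hln := l.isLt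
  have hmax : ∀ m : Fin n, m ≠ l → (π m).val < n - 1 := by
    intro m hm
    have h1' : (π m).val < n := (π m).isLt
    have h2' : π m ≠ π l := fun h => hm (π.injective h)
    have h3' : (π m).val ≠ n - 1 := by
      intro h; exact h2' (Fin.ext (by rw [h, hl]))
    omega
  have hdec : ∀ i j : Fin n, i < j → j < l → (π j).val < (π i).val := by
    intro i j hij hjl
    by_contra hle
    push_neg at hle
    have hne : π i ≠ π j := fun h => (ne_of_lt hij) (π.injective h)
    have hne' : (π i).val ≠ (π j).val := fun h => hne (Fin.ext h)
    have hlt : (π i).val < (π j).val := by omega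
    have hij' : i.val < j.val := hij
    have hjl'' : j.val < l.val := hjl
    have hil : i ≠ l := ne_of_lt (lt_trans hij hjl)
    have hjl' : j ≠ l := ne_of_lt hjl
    have hi := hmax i hil
    have hj := hmax j hjl'
    apply h1
    refine ⟨fun a => if a.val = 0 then i else if a.val = 1 then j else l, ?_, ?_⟩
    · intro a b hab
      rcases a with ⟨av, ha3⟩; rcases b with ⟨bv, hb3⟩
      rw [Fin.lt_def] at hab
      simp only at hab
      rw [Fin.lt_def]
      interval_cases av <;> interval_cases bv <;> norm_num <;> omega
    · intro a b
      rw [hp, hp, Fin.lt_def]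
      rcases a with ⟨av, ha3⟩; rcases b with ⟨bv, hb3⟩
      simp only
      interval_cases av <;> interval_cases bv <;> norm_num <;> omega
  apply h3
  have hF : ∀ j : Fin (k+1), l.val - k + j.val < n := fun j => by have := j.isLt; omega
  refine ⟨fun j => ⟨l.val - k + j.val, hF j⟩, ?_, ?_⟩
  · intro a b hab
    have ha := a.isLt
    rw [Fin.lt_def] at hab ⊢
    simp only
    omega
  · intro a b
    have ha := a.isLt
    have hb := b.isLt
    rw [Fin.lt_def]
    simp only [rpat]
    rcases eq_or_ne a.val k with hak | hak <;> rcases eq_or_ne b.val k with hbk | hbk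
    · have hab : a = b := Fin.ext (by omega)
      subst hab
      simp
    · have hfa : (⟨l.val - k + a.val, hF a⟩ : Fin n) = l := Fin.ext (by simp only; omega)
      have hfb : (⟨l.val - k + b.val, hF b⟩ : Fin n) ≠ l := by
        intro h
        have := congrArg Fin.val h
        simp only at this
        omega
      have hmb := hmax _ hfb
      rw [hfa, if_pos hak, if_neg hbk]
      omega
    · have hfb : (⟨l.val - k + b.val, hF b⟩ : Fin n) = l := Fin.ext (by simp only; omega)
      have hfa : (⟨l.val - k + a.val, hF a⟩ : Fin n) ≠ l := by
        intro h
        have := congrArg Fin.val h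
        simp only at this
        omega
      have hma := hmax _ hfa
      rw [hfb, if_pos hbk, if_neg hak]
      omega
    · rw [if_neg hak, if_neg hbk]
      rcases lt_trichotomy a.val b.val with hab | hab | hab
      · have := hdec ⟨l.val - k + a.val, hF a⟩ ⟨l.val - k + b.val, hF b⟩
          (by rw [Fin.lt_def]; simp only; omega) (by rw [Fin.lt_def]; simp only; omega)
        constructor <;> intro h <;> omega
      · have : a = b := Fin.ext hab
        subst this
        simp
      · have := hdec ⟨l.val - k + b.val, hF b⟩ ⟨l.val - k + a.val, hF a⟩
          (by rw [Fin.lt_def]; simp only; omega) (by rw [Fin.lt_def]; simp only; omega)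
        constructor <;> intro h <;> omega
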